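/- Assume p + q < 1. Let f ∈ L¹(Ω,μ) and let f̃ be a boundary extension of f. Then f̃ is μ-integrable on all of Ω̃ and ∫_{Ω̃} |f̃| dμ ≤ (1 − p − q)⁻¹ · ‖f‖_{L¹(Ω)}. -/

import Mathlib

open MeasureTheory Set Filter Topology

/-- The measure `ℓ(·,v)` on `V` given by
`ℓ(dw,v) = p w v⁻¹ k(w,v) ν(dw) + q δ_v(dw)`. -/
noncomputable def ell (p q : ℝ) (k : ℝ → ℝ → ℝ) (ν : Measure ℝ) (V : Set ℝ) (v : ℝ) :
    Measure ℝ :=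
  (ν.restrict V).withDensity (fun w => ENNReal.ofReal (p * w * v⁻¹ * k w v)) +
    (ENNReal.ofReal q) • Measure.dirac v

/-- The sets `Ω₀ = Ω = (0,1) × V` and, for `i ≥ 1`,
`Ω_i = {(x,v) : v ∈ V, −i v b⁻¹ < x ≤ −(i−1) v b⁻¹}`. -/
def Omi (b : ℝ) (V : Set ℝ) : ℕ → Set (ℝ × ℝ)
  | 0 => (Set.Ioo (0 : ℝ) 1) ×ˢ V
  | (i + 1) =>
      {z : ℝ × ℝ | z.2 ∈ V ∧ -(((i : ℝ) + 1) * z.2 * b⁻¹) < z.1 ∧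
        z.1 ≤ -((i : ℝ) * z.2 * b⁻¹)}

/-- `Γ_j = ⋃_{i=0}^{j} Ω_i`. -/
def Gam (b : ℝ) (V : Set ℝ) (j : ℕ) : Set (ℝ × ℝ) :=
  ⋃ i ∈ Finset.range (j + 1), Omi b V i

/-- A measurable function `f̃ : Ω̃ → ℝ` (modelled on all of `ℝ × ℝ`, with
`Ω̃ = (−∞,1) × V`), μ-integrable on each `Γ_j`, is a boundary extension of `f` if
`f̃ = f` a.e. on `{x > 0}` and, a.e. on `{x ≤ 0}`, the function
`w ↦ f̃(1 + x w v⁻¹, w)` is `ℓ(·,v)`-integrable with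
`f̃(x,v) = ∫_V f̃(1 + x w v⁻¹, w) ℓ(dw,v)`. -/
def IsBoundaryExtension (b p q : ℝ) (k : ℝ → ℝ → ℝ) (ν : Measure ℝ) (V : Set ℝ)
    (f ftil : ℝ × ℝ → ℝ) : Prop :=
  Measurable ftil ∧
  (∀ j : ℕ, IntegrableOn ftil (Gam b V j) ((volume : Measure ℝ).prod ν)) ∧
  (∀ᵐ z ∂(((volume : Measure ℝ).prod ν).restrict ((Set.Iio (1 : ℝ)) ×ˢ V)),
    0 < z.1 → ftil z = f z) ∧
  (∀ᵐ z ∂(((volume : Measure ℝ).prod ν).restrict ((Set.Iio (1 : ℝ)) ×ˢ V)),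
    z.1 ≤ 0 →
      Integrable (fun w => ftil (1 + z.1 * w * z.2⁻¹, w)) (ell p q k ν V z.2) ∧
      ftil z = ∫ w, ftil (1 + z.1 * w * z.2⁻¹, w) ∂(ell p q k ν V z.2))

open scoped ENNReal


lemma lint_affine (h : ℝ → ℝ≥0∞) (hm : Measurable h) (c s : ℝ) (hc : c ≠ 0) :
    ∫⁻ x, h (s + c * x) = ENNReal.ofReal |c⁻¹| * ∫⁻ y, h y := by
  calc ∫⁻ x, h (s + c * x)
      = ∫⁻ y, h (s + y) ∂(Measure.map (c * ·) volume) := by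
        exact (lintegral_map (hm.comp (measurable_const_add s))
          (measurable_const_mul c)).symm
    _ = ENNReal.ofReal |c⁻¹| * ∫⁻ y, h (s + y) := by
        rw [Real.map_volume_mul_left hc, lintegral_smul_measure, smul_eq_mul]
    _ = _ := by rw [← lintegral_add_left_eq_self (fun y => h y) s]

lemma setLint_affine (h : ℝ → ℝ≥0∞) (hm : Measurable h) (c s u w : ℝ) (hc : 0 < c) :
    ∫⁻ x in Ioc u w, h (s + c * x)
      = ENNReal.ofReal c⁻¹ * ∫⁻ y in Ioc (s + c * u) (s + c * w), h y := by
  have hiff : ∀ x : ℝ, s + c * x ∈ Ioc (s + c * u) (s + c * w) ↔ x ∈ Ioc u w := by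
    intro x
    simp only [mem_Ioc, add_lt_add_iff_left, add_le_add_iff_left,
      mul_lt_mul_iff_right₀ hc, mul_le_mul_iff_right₀ hc]
  have h1 : ∀ x, (Ioc u w).indicator (fun x => h (s + c * x)) x
      = (Ioc (s + c * u) (s + c * w)).indicator h (s + c * x) := by
    intro x
    by_cases hx : x ∈ Ioc u w
    · rw [indicator_of_mem hx, indicator_of_mem ((hiff x).mpr hx)]
    · rw [indicator_of_notMem hx, indicator_of_notMem (fun hmem => hx ((hiff x).mp hmem))]
  rw [← lintegral_indicator measurableSet_Ioc, ← lintegral_indicator measurableSet_Ioc]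
  calc ∫⁻ x, (Ioc u w).indicator (fun x => h (s + c * x)) x
      = ∫⁻ x, (Ioc (s + c * u) (s + c * w)).indicator h (s + c * x) := by simp_rw [h1]
    _ = _ := by
        rw [lint_affine _ (hm.indicator measurableSet_Ioc) c s hc.ne',
          abs_of_pos (inv_pos.mpr hc)]

lemma slice_lintegral (ν : Measure ℝ) [SigmaFinite ν] (V : Set ℝ) (hVm : MeasurableSet V)
    (g : ℝ × ℝ → ℝ≥0∞) (hg : Measurable g) (J : ℝ → Set ℝ)
    (hJ : ∀ v, MeasurableSet (J v))
    (hS : MeasurableSet {z : ℝ × ℝ | z.2 ∈ V ∧ z.1 ∈ J z.2}) :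
    ∫⁻ z in {z : ℝ × ℝ | z.2 ∈ V ∧ z.1 ∈ J z.2}, g z ∂((volume : Measure ℝ).prod ν)
      = ∫⁻ v in V, ∫⁻ x in J v, g (x, v) ∂volume ∂ν := by
  rw [← lintegral_indicator hS, lintegral_prod_symm' _ (hg.indicator hS),
    ← lintegral_indicator hVm]
  congr 1; funext v
  by_cases hv : v ∈ V
  · rw [indicator_of_mem hv, ← lintegral_indicator (hJ v)]
    congr 1; funext x
    by_cases hx : x ∈ J v <;> simp [indicator, hv, hx]
  · rw [indicator_of_notMem hv]
    have : ∀ x : ℝ, ({z : ℝ × ℝ | z.2 ∈ V ∧ z.1 ∈ J z.2}).indicator g (x, v) = 0 := by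
      intro x; exact indicator_of_notMem (fun hmem => hv hmem.1) g
    simp [this]
lemma Omi_zero_eq (b : ℝ) (V : Set ℝ) :
    Omi b V 0 = {z : ℝ × ℝ | z.2 ∈ V ∧ z.1 ∈ Ioo (0:ℝ) 1} := by
  ext z; simp [Omi, and_comm]

lemma Omi_succ_eq (b : ℝ) (V : Set ℝ) (i : ℕ) :
    Omi b V (i + 1) = {z : ℝ × ℝ | z.2 ∈ V ∧
      z.1 ∈ Ioc (-(((i : ℝ) + 1) * z.2 * b⁻¹)) (-((i : ℝ) * z.2 * b⁻¹))} := by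
  ext z; simp [Omi, mem_Ioc]

lemma Omi_meas (b : ℝ) {V : Set ℝ} (hVm : MeasurableSet V) (i : ℕ) :
    MeasurableSet (Omi b V i) := by
  cases i with
  | zero => exact measurableSet_Ioo.prod hVm
  | succ i =>
      refine (hVm.preimage measurable_snd).inter (MeasurableSet.inter ?_ ?_)
      · exact measurableSet_lt (by fun_prop) measurable_fst
      · exact measurableSet_le measurable_fst (by fun_prop)

lemma Gam_meas (b : ℝ) {V : Set ℝ} (hVm : MeasurableSet V) (j : ℕ) :
    MeasurableSet (Gam b V j) :=
  MeasurableSet.biUnion (Finset.range (j + 1)).countable_toSet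
    (fun i _ => Omi_meas b hVm i)

lemma Gam_mono (b : ℝ) (V : Set ℝ) : Monotone (Gam b V) := by
  intro m n hmn
  intro z hz
  simp only [Gam, Set.mem_iUnion, Finset.mem_range] at *
  obtain ⟨i, hi, hz⟩ := hz
  exact ⟨i, by omega, hz⟩

lemma mem_Gam {a b : ℝ} (ha : 0 ≤ a) (hab : a < b) {V : Set ℝ} (hV : V ⊆ Set.Ioo a b)
    {v : ℝ} (hv : v ∈ V) {x : ℝ} (hx1 : x < 1) {n : ℕ}
    (hxn : -((n : ℝ) * v * b⁻¹) < x) : (x, v) ∈ Gam b V n := by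
  have hv0 : 0 < v := ha.trans_lt (hV hv).1
  have hvb : v < b := (hV hv).2
  have hb0 : 0 < b := hv0.trans hvb
  by_cases hx0 : 0 < x
  · simp only [Gam, Set.mem_iUnion, Finset.mem_range]
    exact ⟨0, by omega, ⟨hx0, hx1⟩, hv⟩
  push_neg at hx0
  set t : ℝ := -x * b / v with ht
  have ht0 : 0 ≤ t := div_nonneg (mul_nonneg (neg_nonneg.mpr hx0) hb0.le) hv0.le
  have htn : t < n := by
    rw [ht, div_lt_iff₀ hv0]
    have : (n : ℝ) * v * b⁻¹ > -x := by linarith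
    calc -x * b < ((n : ℝ) * v * b⁻¹) * b := by
          exact mul_lt_mul_of_pos_right (by linarith) hb0
      _ = (n : ℝ) * v := by field_simp
  have hfl : (⌊t⌋₊ : ℝ) ≤ t := Nat.floor_le ht0
  have hfl2 : t < (⌊t⌋₊ : ℝ) + 1 := Nat.lt_floor_add_one t
  have hflt : ⌊t⌋₊ < n := (Nat.floor_lt ht0).mpr htn
  simp only [Gam, Set.mem_iUnion, Finset.mem_range]
  have hpos : 0 < v / b := div_pos hv0 hb0
  have e0 : t * (v / b) = -x := by rw [ht]; field_simp
  refine ⟨⌊t⌋₊ + 1, by omega, hv, ?_, ?_⟩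
  all_goals push_cast
  · have h1 : t * (v / b) < ((⌊t⌋₊ : ℝ) + 1) * (v / b) :=
      mul_lt_mul_of_pos_right hfl2 hpos
    have e2 : ((⌊t⌋₊ : ℝ) + 1) * (v / b) = ((⌊t⌋₊ : ℝ) + 1) * v * b⁻¹ := by ring
    linarith
  · have h1 : (⌊t⌋₊ : ℝ) * (v / b) ≤ t * (v / b) :=
      mul_le_mul_of_nonneg_right hfl hpos.le
    have e2 : ((⌊t⌋₊ : ℝ)) * (v / b) = (⌊t⌋₊ : ℝ) * v * b⁻¹ := by ring
    linarith

lemma Gam_union {a b : ℝ} (ha : 0 ≤ a) (hab : a < b) {V : Set ℝ} (hV : V ⊆ Set.Ioo a b) :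
    (⋃ n, Gam b V n) = (Set.Iio (1:ℝ)) ×ˢ V := by
  apply Set.Subset.antisymm
  · refine Set.iUnion_subset fun n => ?_
    refine Set.iUnion₂_subset fun i _ => ?_
    rintro ⟨x, v⟩ hz
    cases i with
    | zero => exact ⟨hz.1.2, hz.2⟩
    | succ i =>
        obtain ⟨hv, _, hle⟩ := hz
        have hv0 : 0 < v := ha.trans_lt (hV hv).1
        have hb0 : 0 < b := hv0.trans (hV hv).2
        refine ⟨?_, hv⟩
        have : (0:ℝ) ≤ (i : ℝ) * v * b⁻¹ := by positivity
        simp only [mem_Iio]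
        linarith
  · rintro ⟨x, v⟩ ⟨hx, hv⟩
    have hv0 : 0 < v := ha.trans_lt (hV hv).1
    have hb0 : 0 < b := hv0.trans (hV hv).2
    obtain ⟨n, hn⟩ := exists_nat_gt (-x * b / v)
    refine Set.mem_iUnion.mpr ⟨n, mem_Gam ha hab hV hv hx ?_⟩
    have : -x * b / v < n := hn
    rw [div_lt_iff₀ hv0] at this
    have h2 : -x < (n:ℝ) * v * b⁻¹ := by
      rw [show (n:ℝ) * v * b⁻¹ = (n:ℝ) * v / b by ring, lt_div_iff₀ hb0]
      linarith
    linarith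

lemma Cmeas {g : ℝ × ℝ → ℝ≥0∞} (hg : Measurable g)
    {c1 c2 : ℝ → ℝ} (h1 : Measurable c1) (h2 : Measurable c2) :
    Measurable (fun w => ∫⁻ y in Ioc (c1 w) (c2 w), g (y, w) ∂(volume : Measure ℝ)) := by
  have hT : MeasurableSet {z : ℝ × ℝ | c1 z.1 < z.2 ∧ z.2 ≤ c2 z.1} :=
    (measurableSet_lt (h1.comp measurable_fst) measurable_snd).inter
      (measurableSet_le measurable_snd (h2.comp measurable_fst))
  have heq : ∀ w, ∫⁻ y in Ioc (c1 w) (c2 w), g (y, w) ∂(volume : Measure ℝ)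
      = ∫⁻ y, ({z : ℝ × ℝ | c1 z.1 < z.2 ∧ z.2 ≤ c2 z.1}).indicator
          (fun z => g (z.2, z.1)) (w, y) ∂(volume : Measure ℝ) := by
    intro w
    rw [← lintegral_indicator measurableSet_Ioc]
    refine lintegral_congr fun y => ?_
    by_cases hy : y ∈ Ioc (c1 w) (c2 w)
    · rw [indicator_of_mem hy, indicator_of_mem] ; exact hy
    · rw [indicator_of_notMem hy, indicator_of_notMem] ; exact hy
  simp_rw [heq]
  exact Measurable.lintegral_prod_right'
    ((hg.comp (measurable_snd.prodMk measurable_fst)).indicator hT)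

lemma lint_k_one {ν : Measure ℝ} {V : Set ℝ} {k : ℝ → ℝ → ℝ}
    (hkm : Measurable (Function.uncurry k)) (hknn : ∀ w v : ℝ, 0 ≤ k w v)
    {w : ℝ} (h : ∫ v in V, k w v ∂ν = 1) :
    ∫⁻ v in V, ENNReal.ofReal (k w v) ∂ν = 1 := by
  have hmeas : Measurable (fun v => k w v) := hkm.comp measurable_prodMk_left
  rw [MeasureTheory.integral_eq_lintegral_of_nonneg_ae (ae_of_all _ fun v => hknn w v)
    hmeas.aestronglyMeasurable] at h
  set L := ∫⁻ v in V, ENNReal.ofReal (k w v) ∂ν with hL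
  by_cases hLtop : L = ⊤
  · rw [hLtop] at h; simp at h
  · have h2 := ENNReal.ofReal_toReal hLtop
    rw [h] at h2
    simpa using h2.symm

set_option maxHeartbeats 1000000 in
lemma key_est (a b p q : ℝ) (ha : 0 ≤ a)
    (hp : 0 ≤ p) (hq : 0 ≤ q)
    (V : Set ℝ) (hV : V ⊆ Set.Ioo a b) (hVm : MeasurableSet V)
    (ν : Measure ℝ) [SigmaFinite ν]
    (k : ℝ → ℝ → ℝ) (hkm : Measurable (Function.uncurry k))
    (hknn : ∀ w v : ℝ, 0 ≤ k w v)
    (hk1 : ∀ w ∈ V, ∫ v in V, k w v ∂ν = 1)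
    (ftil : ℝ × ℝ → ℝ) (hftm : Measurable ftil)
    (hbd : ∀ᵐ v ∂(ν.restrict V), ∀ᵐ x ∂((volume : Measure ℝ).restrict (Iio 1)),
      x ≤ 0 → Integrable (fun w => ftil (1 + x * w * v⁻¹, w)) (ell p q k ν V v) ∧
        ftil (x, v) = ∫ w, ftil (1 + x * w * v⁻¹, w) ∂(ell p q k ν V v))
    (i : ℕ) :
    ∫⁻ z in Omi b V (i+1), (‖ftil z‖₊ : ℝ≥0∞) ∂((volume : Measure ℝ).prod ν)
      ≤ ENNReal.ofReal (p + q) *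
        ∫⁻ w in V, ∫⁻ y in Ioc (1 - ((i:ℝ)+1) * w * b⁻¹) (1 - (i:ℝ) * w * b⁻¹),
          (‖ftil (y, w)‖₊ : ℝ≥0∞) ∂(volume : Measure ℝ) ∂ν := by
  set g : ℝ × ℝ → ℝ≥0∞ := fun z => (‖ftil z‖₊ : ℝ≥0∞) with hgdef
  have hgm : Measurable g := hftm.nnnorm.coe_nnreal_ennreal
  set C : ℝ → ℝ≥0∞ := fun w =>
    ∫⁻ y in Ioc (1 - ((i:ℝ)+1) * w * b⁻¹) (1 - (i:ℝ) * w * b⁻¹), g (y, w)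
      ∂(volume : Measure ℝ) with hCdef
  have hCm : Measurable C := Cmeas hgm (by fun_prop) (by fun_prop)
  have hkv : ∀ v : ℝ, Measurable (fun w => k w v) := fun v =>
    hkm.comp (measurable_id.prodMk measurable_const)
  have hkw : ∀ w : ℝ, Measurable (fun v => k w v) := fun w =>
    hkm.comp measurable_prodMk_left
  have hOeq := Omi_succ_eq b V i
  have hslice : ∫⁻ z in Omi b V (i+1), g z ∂((volume : Measure ℝ).prod ν)
      = ∫⁻ v in V, ∫⁻ x in Ioc (-(((i:ℝ)+1) * v * b⁻¹)) (-((i:ℝ) * v * b⁻¹)),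
          g (x, v) ∂(volume : Measure ℝ) ∂ν := by
    rw [hOeq]
    exact slice_lintegral ν V hVm g hgm
      (fun v => Ioc (-(((i:ℝ)+1) * v * b⁻¹)) (-((i:ℝ) * v * b⁻¹)))
      (fun v => measurableSet_Ioc) (hOeq ▸ Omi_meas b hVm (i+1))
  rw [hslice]
  have hVae : ∀ᵐ v ∂(ν.restrict V), v ∈ V := ae_restrict_mem hVm
  -- measurability of the k-part integrand as function of v
  have hAm : Measurable (fun v => ∫⁻ w in V, ENNReal.ofReal (p * k w v) * C w ∂ν) := by
    apply Measurable.lintegral_prod_right' (f := fun z : ℝ × ℝ =>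
      ENNReal.ofReal (p * k z.2 z.1) * C z.2)
    exact (ENNReal.measurable_ofReal.comp
      (measurable_const.mul (hkm.comp (measurable_snd.prodMk measurable_fst)))).mul
      (hCm.comp measurable_snd)
  have main : ∀ᵐ v ∂(ν.restrict V),
      ∫⁻ x in Ioc (-(((i:ℝ)+1) * v * b⁻¹)) (-((i:ℝ) * v * b⁻¹)), g (x, v)
          ∂(volume : Measure ℝ)
        ≤ (∫⁻ w in V, ENNReal.ofReal (p * k w v) * C w ∂ν)
          + ENNReal.ofReal q * C v := by
    filter_upwards [hbd, hVae] with v hbv hv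
    have hv0 : 0 < v := ha.trans_lt (hV hv).1
    have hvb : v < b := (hV hv).2
    have hb0 : 0 < b := hv0.trans hvb
    set L : ℝ := -(((i:ℝ)+1) * v * b⁻¹) with hLdef
    set R : ℝ := -((i:ℝ) * v * b⁻¹) with hRdef
    have hR0 : R ≤ 0 := neg_nonpos.mpr (by positivity)
    have hsub : Ioc L R ⊆ Iio 1 := fun x hx => lt_of_le_of_lt (hx.2.trans hR0) one_pos
    have hbv' := ae_restrict_of_ae_restrict_of_subset hsub hbv
    have hdens : Measurable (fun w => ENNReal.ofReal (p * w * v⁻¹ * k w v)) :=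
      ENNReal.measurable_ofReal.comp
        (((measurable_const.mul measurable_id).mul measurable_const).mul (hkv v))
    have hpt : ∀ᵐ x ∂((volume : Measure ℝ).restrict (Ioc L R)),
        g (x, v) ≤ (∫⁻ w in V,
            ENNReal.ofReal (p * w * v⁻¹ * k w v) * g (1 + x * w * v⁻¹, w) ∂ν)
          + ENNReal.ofReal q * g (1 + x, v) := by
      filter_upwards [hbv', ae_restrict_mem measurableSet_Ioc] with x hx hmem
      have hx0 : x ≤ 0 := hmem.2.trans hR0
      obtain ⟨hint, heqx⟩ := hx hx0
      have hGm : Measurable (fun w => g (1 + x * w * v⁻¹, w)) :=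
        hgm.comp ((by fun_prop : Measurable fun w : ℝ => (1 + x * w * v⁻¹, w)))
      have step1 : g (x, v) ≤ ∫⁻ w, g (1 + x * w * v⁻¹, w) ∂(ell p q k ν V v) := by
        calc g (x, v) = ENNReal.ofReal ‖ftil (x, v)‖ := (ofReal_norm_eq_enorm _).symm
          _ ≤ ENNReal.ofReal (∫ w, ‖ftil (1 + x * w * v⁻¹, w)‖ ∂(ell p q k ν V v)) := by
              apply ENNReal.ofReal_le_ofReal
              rw [heqx]
              exact norm_integral_le_integral_norm _
          _ = ∫⁻ w, (‖ftil (1 + x * w * v⁻¹, w)‖₊ : ℝ≥0∞) ∂(ell p q k ν V v) :=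
              ofReal_integral_norm_eq_lintegral_enorm hint
      refine step1.trans ?_
      rw [ell, lintegral_add_measure, lintegral_smul_measure, lintegral_dirac' v hGm,
        lintegral_withDensity_eq_lintegral_mul _ hdens hGm]
      have hxv : x * v * v⁻¹ = x := by field_simp
      rw [hxv]
      exact le_rfl
    calc ∫⁻ x in Ioc L R, g (x, v) ∂(volume : Measure ℝ)
        ≤ ∫⁻ x in Ioc L R, ((∫⁻ w in V,
              ENNReal.ofReal (p * w * v⁻¹ * k w v) * g (1 + x * w * v⁻¹, w) ∂ν)
            + ENNReal.ofReal q * g (1 + x, v)) ∂(volume : Measure ℝ) :=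
          lintegral_mono_ae hpt
      _ = (∫⁻ x in Ioc L R, (∫⁻ w in V,
              ENNReal.ofReal (p * w * v⁻¹ * k w v) * g (1 + x * w * v⁻¹, w) ∂ν)
            ∂(volume : Measure ℝ))
          + ∫⁻ x in Ioc L R, ENNReal.ofReal q * g (1 + x, v) ∂(volume : Measure ℝ) := by
          apply lintegral_add_left
          apply Measurable.lintegral_prod_right' (f := fun z : ℝ × ℝ =>
            ENNReal.ofReal (p * z.2 * v⁻¹ * k z.2 v) * g (1 + z.1 * z.2 * v⁻¹, z.2))
          refine Measurable.mul (f := fun z : ℝ × ℝ => ENNReal.ofReal (p * z.2 * v⁻¹ * k z.2 v)) (g := fun z : ℝ × ℝ => g (1 + z.1 * z.2 * v⁻¹, z.2)) ?_ ?_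
          · exact ENNReal.measurable_ofReal.comp (by fun_prop)
          · exact hgm.comp (by fun_prop)
      _ ≤ (∫⁻ w in V, ENNReal.ofReal (p * k w v) * C w ∂ν)
          + ENNReal.ofReal q * C v := by
          refine add_le_add ?_ ?_
          · -- the k-part
            rw [lintegral_lintegral_swap]
            · apply lintegral_mono_ae
              filter_upwards [hVae] with w hw
              have hw0 : 0 < w := ha.trans_lt (hV hw).1
              have hwb : w < b := (hV hw).2
              have hr : 0 < w * v⁻¹ := by positivity
              have harg : ∀ x : ℝ, 1 + x * w * v⁻¹ = 1 + (w * v⁻¹) * x := fun x => by ring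
              simp_rw [harg]
              rw [lintegral_const_mul _
                (show Measurable fun x : ℝ => g (1 + w * v⁻¹ * x, w) from
                  hgm.comp (by fun_prop))]
              rw [setLint_affine (fun y => g (y, w))
                (hgm.comp (by fun_prop)) (w * v⁻¹) 1 L R hr]
              have e1 : 1 + (w * v⁻¹) * L = 1 - ((i:ℝ)+1) * w * b⁻¹ := by
                rw [hLdef]; field_simp; ring
              have e2 : 1 + (w * v⁻¹) * R = 1 - (i:ℝ) * w * b⁻¹ := by
                rw [hRdef]; field_simp; ring
              rw [e1, e2, ← mul_assoc, ← ENNReal.ofReal_mul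
                (mul_nonneg (mul_nonneg (mul_nonneg hp hw0.le)
                  (inv_nonneg.mpr hv0.le)) (hknn w v))]
              apply le_of_eq
              congr 2
              field_simp
            · refine AEMeasurable.mul (f := fun z : ℝ × ℝ => ENNReal.ofReal (p * z.2 * v⁻¹ * k z.2 v)) (g := fun z : ℝ × ℝ => g (1 + z.1 * z.2 * v⁻¹, z.2)) ?_ ?_
              · exact (ENNReal.measurable_ofReal.comp (by fun_prop)).aemeasurable
              · exact (hgm.comp (by fun_prop)).aemeasurable
          · -- the dirac part
            rw [lintegral_const_mul _
              (show Measurable fun x : ℝ => g (1 + x, v) from hgm.comp (by fun_prop))]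
            have := setLint_affine (fun y => g (y, v)) (hgm.comp (by fun_prop)) 1 1 L R
              one_pos
            simp only [one_mul] at this
            rw [this]
            have e1 : 1 + L = 1 - ((i:ℝ)+1) * v * b⁻¹ := by rw [hLdef]; ring
            have e2 : 1 + R = 1 - (i:ℝ) * v * b⁻¹ := by rw [hRdef]; ring
            rw [e1, e2]
            simp [ENNReal.ofReal_one]
            exact le_rfl
  calc ∫⁻ v in V, ∫⁻ x in Ioc (-(((i:ℝ)+1) * v * b⁻¹)) (-((i:ℝ) * v * b⁻¹)),
          g (x, v) ∂(volume : Measure ℝ) ∂ν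
      ≤ ∫⁻ v in V, ((∫⁻ w in V, ENNReal.ofReal (p * k w v) * C w ∂ν)
          + ENNReal.ofReal q * C v) ∂ν := lintegral_mono_ae main
    _ = (∫⁻ v in V, ∫⁻ w in V, ENNReal.ofReal (p * k w v) * C w ∂ν ∂ν)
        + ∫⁻ v in V, ENNReal.ofReal q * C v ∂ν := lintegral_add_left hAm _
    _ = (∫⁻ w in V, ∫⁻ v in V, ENNReal.ofReal (p * k w v) * C w ∂ν ∂ν)
        + ENNReal.ofReal q * ∫⁻ v in V, C v ∂ν := by
        rw [lintegral_lintegral_swap, lintegral_const_mul _ hCm]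
        apply AEMeasurable.mul
        · exact (ENNReal.measurable_ofReal.comp
            (measurable_const.mul (hkm.comp (measurable_snd.prodMk measurable_fst)))).aemeasurable
        · exact (hCm.comp measurable_snd).aemeasurable
    _ = (∫⁻ w in V, ENNReal.ofReal p * C w ∂ν)
        + ENNReal.ofReal q * ∫⁻ v in V, C v ∂ν := by
        congr 1
        apply lintegral_congr_ae
        filter_upwards [hVae] with w hw
        calc ∫⁻ v in V, ENNReal.ofReal (p * k w v) * C w ∂ν
            = ∫⁻ v in V, (ENNReal.ofReal p * C w) * ENNReal.ofReal (k w v) ∂ν := by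
              apply lintegral_congr fun v => ?_
              rw [ENNReal.ofReal_mul hp]
              ring
          _ = (ENNReal.ofReal p * C w) * ∫⁻ v in V, ENNReal.ofReal (k w v) ∂ν :=
              lintegral_const_mul _ (ENNReal.measurable_ofReal.comp (hkw w))
          _ = ENNReal.ofReal p * C w := by
              rw [lint_k_one hkm hknn (hk1 w hw), mul_one]
    _ = ENNReal.ofReal (p + q) * ∫⁻ w in V, C w ∂ν := by
        rw [lintegral_const_mul _ hCm, ENNReal.ofReal_add hp hq, add_mul]

lemma tele_slice (h : ℝ → ℝ≥0∞) (c : ℝ) (hc : 0 ≤ c) : ∀ n : ℕ,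
    ∑ j ∈ Finset.range n,
        ∫⁻ y in Ioc (1 - ((j:ℝ)+1) * c) (1 - (j:ℝ) * c), h y ∂(volume : Measure ℝ)
      = ∫⁻ y in Ioc (1 - (n:ℝ) * c) 1, h y ∂(volume : Measure ℝ) := by
  intro n
  induction n with
  | zero => simp
  | succ n ih =>
      rw [Finset.sum_range_succ, ih]
      have hd : Disjoint (Ioc (1 - ((n:ℝ)+1) * c) (1 - (n:ℝ) * c)) (Ioc (1 - (n:ℝ) * c) 1) :=
        Set.Ioc_disjoint_Ioc_of_le le_rfl
      have hu : Ioc (1 - ((n:ℝ)+1) * c) (1 - (n:ℝ) * c) ∪ Ioc (1 - (n:ℝ) * c) 1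
          = Ioc (1 - ((n:ℝ)+1) * c) 1 := by
        apply Set.Ioc_union_Ioc_eq_Ioc
        · nlinarith
        · nlinarith
      rw [add_comm, ← lintegral_union measurableSet_Ioc hd, hu]
      push_cast
      ring_nf

lemma P_succ_le (a b : ℝ) (ha : 0 ≤ a) (hab : a < b)
    (V : Set ℝ) (hV : V ⊆ Set.Ioo a b) (hVm : MeasurableSet V)
    (ν : Measure ℝ) [SigmaFinite ν]
    (g : ℝ × ℝ → ℝ≥0∞) (hgm : Measurable g) (n : ℕ) :
    ∫⁻ v in V, ∫⁻ y in Ioc (1 - ((n:ℝ)+1) * v * b⁻¹) 1, g (y, v)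
        ∂(volume : Measure ℝ) ∂ν
      ≤ ∫⁻ z in Gam b V n, g z ∂((volume : Measure ℝ).prod ν) := by
  have hIoo : ∀ v : ℝ, ∫⁻ y in Ioc (1 - ((n:ℝ)+1) * v * b⁻¹) 1, g (y, v)
      ∂(volume : Measure ℝ)
      = ∫⁻ y in Ioo (1 - ((n:ℝ)+1) * v * b⁻¹) 1, g (y, v) ∂(volume : Measure ℝ) := by
    intro v
    rw [restrict_Ioo_eq_restrict_Ioc]
  simp_rw [hIoo]
  have hSm : MeasurableSet {z : ℝ × ℝ | z.2 ∈ V ∧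
      z.1 ∈ Ioo (1 - ((n:ℝ)+1) * z.2 * b⁻¹) 1} := by
    refine (hVm.preimage measurable_snd).inter (MeasurableSet.inter ?_ ?_)
    · exact measurableSet_lt (by fun_prop) measurable_fst
    · exact measurableSet_lt measurable_fst measurable_const
  rw [← slice_lintegral ν V hVm g hgm
    (fun v => Ioo (1 - ((n:ℝ)+1) * v * b⁻¹) 1) (fun v => measurableSet_Ioo) hSm]
  apply lintegral_mono_set
  rintro ⟨y, v⟩ ⟨hv, hy1, hy2⟩
  have hv0 : 0 < v := ha.trans_lt (hV hv).1
  have hvb : v < b := (hV hv).2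
  have hb0 : 0 < b := hv0.trans hvb
  apply mem_Gam ha hab hV hv hy2
  have hvb1 : v * b⁻¹ < 1 := by
    rw [← div_eq_mul_inv]
    exact (div_lt_one hb0).mpr hvb
  have : 1 - ((n:ℝ)+1) * v * b⁻¹ ≥ -((n:ℝ) * v * b⁻¹) := by nlinarith
  linarith


set_option maxHeartbeats 1000000 in
theorem stmt3
    (a b p q : ℝ) (ha : 0 ≤ a) (hab : a < b)
    (hp : 0 ≤ p) (hq : 0 ≤ q) (hpq : 0 < p + q)
    (V : Set ℝ) (hV : V ⊆ Set.Ioo a b) (hVm : MeasurableSet V)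
    (ν : Measure ℝ) [SigmaFinite ν]
    (k : ℝ → ℝ → ℝ) (hkm : Measurable (Function.uncurry k))
    (hknn : ∀ w v : ℝ, 0 ≤ k w v)
    (hk1 : ∀ w ∈ V, ∫ v in V, k w v ∂ν = 1)
    (f ftil : ℝ × ℝ → ℝ)
    (hf : IntegrableOn f ((Set.Ioo (0 : ℝ) 1) ×ˢ V) ((volume : Measure ℝ).prod ν))
    (hext : IsBoundaryExtension b p q k ν V f ftil)
    (hpq1 : p + q < 1) :
    IntegrableOn ftil ((Set.Iio (1 : ℝ)) ×ˢ V) ((volume : Measure ℝ).prod ν) ∧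
    ∫ z in (Set.Iio (1 : ℝ)) ×ˢ V, |ftil z| ∂((volume : Measure ℝ).prod ν)
      ≤ (1 - p - q)⁻¹ *
        ∫ z in (Set.Ioo (0 : ℝ) 1) ×ˢ V, |f z| ∂((volume : Measure ℝ).prod ν) := by
  obtain ⟨hftm, hGamInt, haeq, hbd0⟩ := hext
  set g : ℝ × ℝ → ℝ≥0∞ := fun z => (‖ftil z‖₊ : ℝ≥0∞) with hgdef
  have hgm : Measurable g := hftm.nnnorm.coe_nnreal_ennreal
  rw [← Measure.prod_restrict] at hbd0
  have hswap : MeasurePreserving Prod.swap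
      ((ν.restrict V).prod ((volume : Measure ℝ).restrict (Iio 1)))
      (((volume : Measure ℝ).restrict (Iio 1)).prod (ν.restrict V)) :=
    Measure.measurePreserving_swap
  have hbd1 := hswap.quasiMeasurePreserving.tendsto_ae.eventually hbd0
  have hbd2 : ∀ᵐ v ∂(ν.restrict V), ∀ᵐ x ∂((volume : Measure ℝ).restrict (Iio 1)),
      x ≤ 0 → Integrable (fun w => ftil (1 + x * w * v⁻¹, w)) (ell p q k ν V v) ∧
        ftil (x, v) = ∫ w, ftil (1 + x * w * v⁻¹, w) ∂(ell p q k ν V v) :=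
    Measure.ae_ae_of_ae_prod hbd1
  set T : ℕ → ℝ≥0∞ := fun n =>
    ∫⁻ z in Gam b V n, g z ∂((volume : Measure ℝ).prod ν) with hTdef
  have hTfin : ∀ n, T n ≠ ⊤ := fun n => ((hGamInt n).2).ne
  have hGam0 : Gam b V 0 = Omi b V 0 := by simp [Gam]
  set C : ℕ → ℝ → ℝ≥0∞ := fun j w =>
    ∫⁻ y in Ioc (1 - ((j:ℝ)+1) * w * b⁻¹) (1 - (j:ℝ) * w * b⁻¹), g (y, w)
      ∂(volume : Measure ℝ) with hCdef
  have hCm : ∀ j, Measurable (C j) := fun j => Cmeas hgm (by fun_prop) (by fun_prop)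
  set P : ℕ → ℝ≥0∞ := fun n =>
    ∫⁻ v in V, ∫⁻ y in Ioc (1 - (n:ℝ) * v * b⁻¹) 1, g (y, v)
      ∂(volume : Measure ℝ) ∂ν with hPdef
  have hMP : ∀ n, ∑ j ∈ Finset.range n, ∫⁻ w in V, C j w ∂ν = P n := by
    intro n
    rw [← lintegral_finset_sum _ (fun j _ => hCm j)]
    apply lintegral_congr_ae
    filter_upwards [ae_restrict_mem hVm] with w hw
    have hw0 : (0:ℝ) < w := ha.trans_lt (hV hw).1
    have hwb0 : 0 ≤ w * b⁻¹ := by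
      have hb0 : 0 < b := ha.trans_lt hab
      positivity
    have htele := tele_slice (fun y => g (y, w)) (w * b⁻¹) hwb0 n
    simp only [← mul_assoc] at htele
    exact htele
  have hPT : ∀ n, P n ≤ T n := by
    intro n
    cases n with
    | zero => simp [hPdef]
    | succ n =>
        have h1 := P_succ_le a b ha hab V hV hVm ν g hgm n
        have h2 : P (n+1) ≤ T n := by
          simp only [hPdef]
          have hcast : ((n+1 : ℕ):ℝ) = (n:ℝ) + 1 := by push_cast; ring
          rw [hcast]
          exact h1
        exact h2.trans (lintegral_mono_set (Gam_mono b V (Nat.le_succ n)))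
  have hkey : ∀ j, ∫⁻ z in Omi b V (j+1), g z ∂((volume : Measure ℝ).prod ν)
      ≤ ENNReal.ofReal (p+q) * ∫⁻ w in V, C j w ∂ν :=
    fun j => key_est a b p q ha hp hq V hV hVm ν k hkm hknn hk1 ftil hftm hbd2 j
  set μg := ((volume : Measure ℝ).prod ν).withDensity g with hμgdef
  have hμg : ∀ s : Set (ℝ × ℝ), MeasurableSet s →
      μg s = ∫⁻ z in s, g z ∂((volume : Measure ℝ).prod ν) :=
    fun s hs => withDensity_apply g hs
  have hrec : ∀ n, T n ≤ T 0 + ENNReal.ofReal (p+q) * P n := by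
    intro n
    have h1 : T n ≤ ∑ i ∈ Finset.range (n+1), μg (Omi b V i) := by
      rw [hTdef]
      simp only
      rw [← hμg _ (Gam_meas b hVm n)]
      exact measure_biUnion_finset_le _ _
    rw [Finset.sum_range_succ'] at h1
    have h2 : ∑ i ∈ Finset.range n, μg (Omi b V (i+1))
        ≤ ENNReal.ofReal (p+q) * P n := by
      rw [← hMP n, Finset.mul_sum]
      apply Finset.sum_le_sum
      intro j _
      rw [hμg _ (Omi_meas b hVm (j+1))]
      exact hkey j
    have h3 : μg (Omi b V 0) = T 0 := by
      rw [hμg _ (Omi_meas b hVm 0), hTdef]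
      simp only [hGam0]
    calc T n ≤ ∑ i ∈ Finset.range n, μg (Omi b V (i+1)) + μg (Omi b V 0) := h1
      _ ≤ ENNReal.ofReal (p+q) * P n + T 0 := add_le_add h2 (le_of_eq h3)
      _ = T 0 + ENNReal.ofReal (p+q) * P n := add_comm _ _
  have hpq0 : 0 ≤ p + q := add_nonneg hp hq
  have hpos : 0 < 1 - (p+q) := by linarith
  set B : ℝ := (1 - (p+q))⁻¹ * (T 0).toReal with hBdef
  have hTreal : ∀ n, (T n).toReal ≤ B := by
    intro n
    have hfin2 : ENNReal.ofReal (p+q) * T n ≠ ⊤ :=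
      ENNReal.mul_ne_top ENNReal.ofReal_ne_top (hTfin n)
    have h1 : T n ≤ T 0 + ENNReal.ofReal (p+q) * T n :=
      (hrec n).trans (add_le_add le_rfl (mul_le_mul_right (hPT n) _))
    have h2 := ENNReal.toReal_mono (ENNReal.add_ne_top.mpr ⟨hTfin 0, hfin2⟩) h1
    rw [ENNReal.toReal_add (hTfin 0) hfin2, ENNReal.toReal_mul,
      ENNReal.toReal_ofReal hpq0] at h2
    have h3 : (T n).toReal * (1 - (p+q)) ≤ (T 0).toReal := by nlinarith
    calc (T n).toReal = ((T n).toReal * (1 - (p+q))) * (1 - (p+q))⁻¹ := by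
          field_simp
      _ ≤ (T 0).toReal * (1 - (p+q))⁻¹ :=
          mul_le_mul_of_nonneg_right h3 (inv_nonneg.mpr hpos.le)
      _ = B := by rw [hBdef]; ring
  have hTB : ∀ n, T n ≤ ENNReal.ofReal B := by
    intro n
    rw [← ENNReal.ofReal_toReal (hTfin n)]
    exact ENNReal.ofReal_le_ofReal (hTreal n)
  have hSmeas : MeasurableSet ((Set.Iio (1:ℝ)) ×ˢ V) := measurableSet_Iio.prod hVm
  have htot2 : ∫⁻ z in (Set.Iio (1:ℝ)) ×ˢ V, g z ∂((volume : Measure ℝ).prod ν)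
      ≤ ENNReal.ofReal B := by
    rw [← hμg _ hSmeas, ← Gam_union ha hab hV, (Gam_mono b V).measure_iUnion]
    apply iSup_le
    intro n
    rw [hμg _ (Gam_meas b hVm n)]
    exact hTB n
  have hint : IntegrableOn ftil ((Set.Iio (1:ℝ)) ×ˢ V) ((volume : Measure ℝ).prod ν) := by
    refine ⟨hftm.aestronglyMeasurable.restrict, ?_⟩
    exact lt_of_le_of_lt htot2 ENNReal.ofReal_lt_top
  refine ⟨hint, ?_⟩
  have habs : ∀ s : Set (ℝ × ℝ), ∫ z in s, |ftil z| ∂((volume : Measure ℝ).prod ν)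
      = (∫⁻ z in s, g z ∂((volume : Measure ℝ).prod ν)).toReal := by
    intro s
    have h := integral_norm_eq_lintegral_enorm
      (μ := ((volume : Measure ℝ).prod ν).restrict s) hftm.aestronglyMeasurable.restrict
    simp only [Real.norm_eq_abs] at h; exact h
  have heqf : ∀ᵐ z ∂(((volume : Measure ℝ).prod ν).restrict (Omi b V 0)),
      ftil z = f z := by
    have hsub0 : Omi b V 0 ⊆ (Set.Iio (1:ℝ)) ×ˢ V := by
      rintro ⟨x, v⟩ ⟨hx, hv⟩
      exact ⟨hx.2, hv⟩
    filter_upwards [ae_restrict_of_ae_restrict_of_subset hsub0 haeq,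
      ae_restrict_mem (Omi_meas b hVm 0)] with z hz hzmem
    exact hz hzmem.1.1
  have hT0eq : (T 0).toReal
      = ∫ z in (Set.Ioo (0:ℝ) 1) ×ˢ V, |f z| ∂((volume : Measure ℝ).prod ν) := by
    have h1 : T 0 = ∫⁻ z in Omi b V 0, g z ∂((volume : Measure ℝ).prod ν) := by
      rw [hTdef]; simp only [hGam0]
    rw [h1, ← habs]
    have h2 : ∫ z in Omi b V 0, |ftil z| ∂((volume : Measure ℝ).prod ν)
        = ∫ z in Omi b V 0, |f z| ∂((volume : Measure ℝ).prod ν) :=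
      integral_congr_ae (heqf.mono fun z hz => by simp [hz])
    rw [h2]
    rfl
  rw [habs]
  calc (∫⁻ z in (Set.Iio (1:ℝ)) ×ˢ V, g z ∂((volume : Measure ℝ).prod ν)).toReal
      ≤ (ENNReal.ofReal B).toReal := ENNReal.toReal_mono ENNReal.ofReal_ne_top htot2
    _ = B := ENNReal.toReal_ofReal
        (mul_nonneg (inv_nonneg.mpr hpos.le) ENNReal.toReal_nonneg)
    _ = (1 - p - q)⁻¹ *
        ∫ z in (Set.Ioo (0:ℝ) 1) ×ˢ V, |f z| ∂((volume : Measure ℝ).prod ν) := by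
        rw [hBdef, hT0eq, sub_sub]
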